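/- Let T₁, T₁', λ₁, λ₁' > 0 with λ₁/T₁ > λ₁'/T₁'. Define g(m) = (e^m − 1)λ₁' − λ₁ + λ₁ e^{−m T₁'/T₁} and m₀ = ln(T₁'λ₁/(T₁λ₁')) / (1 + T₁'/T₁). Then m₀ > 0 and g(m₀) < 0. -/

import Mathlib

open Real

/-- Let `T₁, T₁', λ₁, λ₁' > 0` with `λ₁/T₁ > λ₁'/T₁'`. With
`g(m) = (e^m − 1) λ₁' − λ₁ + λ₁ e^{−m T₁'/T₁}` and
`m₀ = ln(T₁' λ₁ / (T₁ λ₁'))/ (1 + T₁'/T₁)`, we have `m₀ > 0` and `g(m₀) < 0`. -/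
theorem g_neg_at_m₀ (T₁ T₁' lam₁ lam₁' : ℝ)
    (hT₁ : 0 < T₁) (hT₁' : 0 < T₁') (hlam₁ : 0 < lam₁) (hlam₁' : 0 < lam₁')
    (hrate : lam₁' / T₁' < lam₁ / T₁)
    (g : ℝ → ℝ)
    (hg : ∀ m, g m = (Real.exp m - 1) * lam₁' - lam₁ + lam₁ * Real.exp (-m * (T₁' / T₁)))
    (m₀ : ℝ) (hm₀ : m₀ = Real.log (T₁' * lam₁ / (T₁ * lam₁')) / (1 + T₁' / T₁)) :
    0 < m₀ ∧ g m₀ < 0 := by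
  set r := T₁' / T₁ with hr
  have hrpos : 0 < r := div_pos hT₁' hT₁
  have hcpos : 0 < T₁' * lam₁ / (T₁ * lam₁') := by positivity
  have hc1 : 1 < T₁' * lam₁ / (T₁ * lam₁') := by
    rw [lt_div_iff₀ (by positivity)]
    have h := (div_lt_div_iff₀ hT₁' hT₁).mp hrate
    nlinarith
  have hlog : 0 < Real.log (T₁' * lam₁ / (T₁ * lam₁')) := Real.log_pos hc1
  have h1r : 0 < 1 + r := by linarith
  have hm₀pos : 0 < m₀ := by rw [hm₀]; exact div_pos hlog h1r
  refine ⟨hm₀pos, ?_⟩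
  -- key identity: exp (m₀ * (1 + r)) = c
  have hkey0 : Real.exp (m₀ * (1 + r)) = T₁' * lam₁ / (T₁ * lam₁') := by
    rw [hm₀, div_mul_cancel₀ _ (ne_of_gt h1r), Real.exp_log hcpos]
  have hceq : T₁' * lam₁ / (T₁ * lam₁') = lam₁ * r / lam₁' := by
    field_simp [hr]
    rw [hr]; field_simp
  -- λ₁' e^{m₀} = λ₁ r e^{-m₀ r}
  have hkey : lam₁' * Real.exp m₀ = lam₁ * r * Real.exp (-(m₀ * r)) := by
    have h : Real.exp m₀ = Real.exp (m₀ * (1 + r)) * Real.exp (-(m₀ * r)) := by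
      rw [← Real.exp_add]; congr 1; ring
    rw [h, hkey0, hceq]
    field_simp
  -- e^{m₀} - 1 < m₀ e^{m₀}
  have h1 : Real.exp m₀ - 1 < m₀ * Real.exp m₀ := by
    have h := Real.add_one_lt_exp (x := -m₀) (by linarith)
    have hE : Real.exp (-m₀) * Real.exp m₀ = 1 := by rw [← Real.exp_add]; simp
    nlinarith [Real.exp_pos m₀]
  -- (m₀ r) e^{-(m₀ r)} < 1 - e^{-(m₀ r)}
  have h2 : (m₀ * r) * Real.exp (-(m₀ * r)) < 1 - Real.exp (-(m₀ * r)) := by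
    have h := Real.add_one_lt_exp (x := m₀ * r) (by positivity)
    have hE : Real.exp (-(m₀ * r)) * Real.exp (m₀ * r) = 1 := by
      rw [← Real.exp_add]; simp
    nlinarith [Real.exp_pos (m₀ * r), Real.exp_pos (-(m₀ * r))]
  rw [hg]
  have hne : -m₀ * r = -(m₀ * r) := by ring
  rw [hne]
  nlinarith [h1, h2, hkey, Real.exp_pos m₀, Real.exp_pos (-(m₀ * r))]
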